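/- The number of vectors in (Z/pZ)^n whose Lee weight lies in the set {d, d-2, d-4, ...} (i.e., Lee weight ≤ d with the same parity as d) is at most the number of multisets of size d from a set of size 2n, namely C(2n + d - 1, d). -/

import Mathlib

/-- Lee weight of an element of `ZMod p`. -/
def leeWt (p : ℕ) (x : ZMod p) : ℕ := min x.val (p - x.val)

/-- Lee weight of a vector in `(ZMod p)^n`: sum of coordinate Lee weights. -/
def leeWtV (p n : ℕ) (x : Fin n → ZMod p) : ℕ := ∑ i, leeWt p (x i)

/-- Sign of an element of `ZMod p`: `true` if it lies in the "negative half". -/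
def neg? (p : ℕ) (x : ZMod p) : Bool := decide (p - x.val < x.val)

lemma lee_inj {p : ℕ} (hp : 2 ≤ p) {x y : ZMod p}
    (h1 : neg? p x = neg? p y) (h2 : leeWt p x = leeWt p y) : x = y := by
  haveI : NeZero p := ⟨by omega⟩
  have hx := ZMod.val_lt x
  have hy := ZMod.val_lt y
  have h1' : (p - x.val < x.val) ↔ (p - y.val < y.val) := by
    simpa [neg?, decide_eq_decide] using h1
  have hval : x.val = y.val := by
    simp only [leeWt] at h2
    omega
  exact ZMod.val_injective p hval

lemma neg_leeWt_pos {p : ℕ} (hp : 2 ≤ p) (x : ZMod p) (h : neg? p x = true) :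
    0 < leeWt p x := by
  haveI : NeZero p := ⟨by omega⟩
  have hx := ZMod.val_lt x
  have h' : p - x.val < x.val := by simpa [neg?] using h
  simp only [leeWt]
  omega

/-- Signed coordinate counts. -/
def base (p n : ℕ) (x : Fin n → ZMod p) (q : Fin n × Bool) : ℕ :=
  if q.2 = neg? p (x q.1) then leeWt p (x q.1) else 0

lemma base_sum (p n : ℕ) (x : Fin n → ZMod p) :
    ∑ q, base p n x q = leeWtV p n x := by
  rw [Fintype.sum_prod_type]
  simp [base, leeWtV, Fintype.sum_ite_eq']

lemma base_min (p n : ℕ) (x : Fin n → ZMod p) (i : Fin n) :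
    min (base p n x (i, false)) (base p n x (i, true)) = 0 := by
  rcases h : neg? p (x i) with _ | _ <;> simp [base, h]

/-- Padded counts: total mass `d`. -/
def cnt (p n d : ℕ) (x : Fin n → ZMod p) (q : Fin n × Bool) : ℕ :=
  base p n x q + (if q.1.val = 0 then (d - leeWtV p n x) / 2 else 0)

lemma cnt_sum (p n d : ℕ) (hn : 1 ≤ n) (x : Fin n → ZMod p) :
    ∑ q, cnt p n d x q = leeWtV p n x + 2 * ((d - leeWtV p n x) / 2) := by
  haveI : NeZero n := ⟨by omega⟩
  unfold cnt
  rw [Finset.sum_add_distrib, base_sum]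
  congr 1
  rw [Fintype.sum_prod_type]
  have hval0 : ∀ i : Fin n, (i.val = 0) ↔ (i = 0) := fun i => by
    rw [Fin.ext_iff, Fin.val_zero]
  simp [hval0, Finset.sum_ite_eq', two_mul, Finset.sum_add_distrib]

lemma cnt_inj (p n d : ℕ) (hp : 2 ≤ p) (hn : 1 ≤ n) {x y : Fin n → ZMod p}
    (h : ∀ q, cnt p n d x q = cnt p n d y q) : x = y := by
  haveI : NeZero n := ⟨by omega⟩
  have ht : (d - leeWtV p n x) / 2 = (d - leeWtV p n y) / 2 := by
    have h0 := h (0, false)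
    have h1 := h (0, true)
    have mx := base_min p n x 0
    have my := base_min p n y 0
    have e0 : ((0 : Fin n) : ℕ) = 0 := Fin.val_zero n
    simp only [cnt, e0, if_pos] at h0 h1
    omega
  have hb : ∀ q, base p n x q = base p n y q := by
    intro q
    have := h q
    simp only [cnt, ht] at this
    omega
  funext i
  have h0 := hb (i, false)
  have h1 := hb (i, true)
  have hneg : neg? p (x i) = neg? p (y i) := by
    rcases hx : neg? p (x i) with _ | _ <;> rcases hy : neg? p (y i) with _ | _
    · rfl
    · have := neg_leeWt_pos hp (y i) hy
      simp [base, hx, hy] at h1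
      omega
    · have := neg_leeWt_pos hp (x i) hx
      simp [base, hx, hy] at h1
      omega
    · rfl
  have hlee : leeWt p (x i) = leeWt p (y i) := by
    rcases hx : neg? p (x i) with _ | _ <;>
      rw [hx] at hneg <;> simp [base, hx, ← hneg] at h0 h1 <;> omega
  exact lee_inj hp hneg hlee

lemma multiset_card_finset_sum {α β : Type*} (s : Finset β) (g : β → Multiset α) :
    Multiset.card (∑ b ∈ s, g b) = ∑ b ∈ s, Multiset.card (g b) := by
  classical
  induction s using Finset.induction with
  | empty => simp
  | @insert a s h ih => simp [Finset.sum_insert h, ih]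

/-- The number of vectors of Lee weight `≤ d` with the same parity as `d`
is at most the number of size-`d` multisets from a `2n`-set. -/
theorem stmt8 (p n d : ℕ) (hp : 2 ≤ p) (hn : 1 ≤ n) (hd : 1 ≤ d) :
    Nat.card {x : Fin n → ZMod p //
        leeWtV p n x ≤ d ∧ leeWtV p n x % 2 = d % 2} ≤
      (2 * n + d - 1).choose d := by
  classical
  haveI : NeZero n := ⟨by omega⟩
  set S := {x : Fin n → ZMod p //
      leeWtV p n x ≤ d ∧ leeWtV p n x % 2 = d % 2}
  let f : S → Sym (Fin n × Bool) d := fun x =>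
    ⟨∑ q : Fin n × Bool, Multiset.replicate (cnt p n d x.1 q) q, by
      rw [multiset_card_finset_sum]
      simp only [Multiset.card_replicate]
      rw [cnt_sum p n d hn]
      obtain ⟨h1, h2⟩ := x.2
      omega⟩
  have hcount : ∀ (x : S) (q : Fin n × Bool),
      Multiset.count q (f x : Multiset (Fin n × Bool)) = cnt p n d x.1 q := by
    intro x q
    simp [f, Multiset.count_sum', Multiset.count_replicate, Finset.sum_ite_eq]
  have hfinj : Function.Injective f := by
    intro a b hab
    apply Subtype.ext
    apply cnt_inj p n d hp hn
    intro q
    rw [← hcount a q, ← hcount b q, hab]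
  calc Nat.card S ≤ Nat.card (Sym (Fin n × Bool) d) :=
        Nat.card_le_card_of_injective f hfinj
    _ = (2 * n + d - 1).choose d := by
        have hc : Fintype.card (Fin n × Bool) = 2 * n := by
          simp [mul_comm]
        rw [Nat.card_eq_fintype_card, Sym.card_sym_eq_multichoose, hc,
          Nat.multichoose_eq]
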